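/- Let Σ be a symmetric positive definite p×p matrix with inverse Θ, μ ∈ ℝ^p, Δ > 0, and let 1_R ∈ ℝ^p be a 0–1 vector that is neither zero nor all ones. Set B₁ = 1_p'Θμ, B₂ = 1_p'Θ1_p, B₃ = 1_R'Θ1_p, B₄ = 1_R'Θ1_R, B₅ = 1_R'Θμ, and assume B₁ ≠ 0, B₃ ≠ 0, and B₄B₂ ≠ B₃². Define κ_w = B₁/Δ, a = Θ1_p/B₂, k = Θ1_R/B₃, w_k = B₄/B₃, w_a = B₃/B₂, l = (k − a)/(w_k − w_a), and w_u = 1_R'(Θμ/B₁ − Θ1_p/B₂). Then for any w_x ∈ ℝ, the unique maximizer of w ↦ μ'w − (Δ/2) w'Σw subject to 1_p'w = 1 and 1_R'w = w_x is w_c* = κ_w( Θμ/B₁ − a ) + (w_x − κ_w w_u) l + ( a − l·(B₃/B₂) ). -/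

import Mathlib

open Matrix

lemma opt_aux {p : ℕ} {S : Matrix (Fin p) (Fin p) ℝ} (hS : S.PosDef)
    {μ u r wc : Fin p → ℝ} {Del c2 c3 : ℝ} (hDel : 0 < Del)
    (hgrad : Del • (S *ᵥ wc) = μ + c2 • u + c3 • r) :
    ∀ w : Fin p → ℝ, u ⬝ᵥ w = u ⬝ᵥ wc → r ⬝ᵥ w = r ⬝ᵥ wc → w ≠ wc →
      μ ⬝ᵥ w - Del / 2 * (w ⬝ᵥ (S *ᵥ w)) < μ ⬝ᵥ wc - Del / 2 * (wc ⬝ᵥ (S *ᵥ wc)) := by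
  intro w hu hr hne
  have hScm : Sᵀ = S := by have h : S.IsSymm := (by simpa using hS.isHermitian); exact h
  set d : Fin p → ℝ := w - wc with hd
  have hd0 : d ≠ 0 := sub_ne_zero.2 hne
  have hpos : 0 < d ⬝ᵥ (S *ᵥ d) := by simpa using hS.dotProduct_mulVec_pos hd0
  have hud : u ⬝ᵥ d = 0 := by rw [hd, dotProduct_sub, hu, sub_self]
  have hrd : r ⬝ᵥ d = 0 := by rw [hd, dotProduct_sub, hr, sub_self]
  have hsymm : wc ⬝ᵥ (S *ᵥ d) = d ⬝ᵥ (S *ᵥ wc) := by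
    rw [dotProduct_mulVec, ← mulVec_transpose, hScm, dotProduct_comm]
  have hmid : Del * (d ⬝ᵥ (S *ᵥ wc)) = μ ⬝ᵥ d := by
    have : d ⬝ᵥ (Del • (S *ᵥ wc)) = d ⬝ᵥ μ := by
      rw [hgrad, dotProduct_add, dotProduct_add, dotProduct_smul, dotProduct_smul,
        dotProduct_comm d u, hud, dotProduct_comm d r, hrd]
      simp
    rw [dotProduct_smul] at this
    rw [dotProduct_comm μ d]
    simpa using this
  have hw : w = wc + d := by rw [hd]; ring
  rw [hw, dotProduct_add, mulVec_add, dotProduct_add, add_dotProduct, add_dotProduct,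
    hsymm]
  have h2 : 0 < Del / 2 * (d ⬝ᵥ (S *ᵥ d)) := by positivity
  nlinarith [hmid, h2]

lemma prop_core {p : ℕ} {S : Matrix (Fin p) (Fin p) ℝ} (hS : S.PosDef)
    {μ R m n t : Fin p → ℝ} {Del : ℝ} (hDel : 0 < Del)
    (hsm : S *ᵥ m = μ) (hsn : S *ᵥ n = 1) (hst : S *ᵥ t = R)
    (h13 : (1 : Fin p → ℝ) ⬝ᵥ t = R ⬝ᵥ n)
    (hb1 : (1 : Fin p → ℝ) ⬝ᵥ m ≠ 0) (hb2 : (1 : Fin p → ℝ) ⬝ᵥ n ≠ 0)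
    (hb3 : R ⬝ᵥ n ≠ 0)
    (hd : R ⬝ᵥ t / (R ⬝ᵥ n) - R ⬝ᵥ n / ((1 : Fin p → ℝ) ⬝ᵥ n) ≠ 0)
    (wx : ℝ) (wc : Fin p → ℝ)
    (hwc : wc =
      ((1 : Fin p → ℝ) ⬝ᵥ m / Del) • (((1 : Fin p → ℝ) ⬝ᵥ m)⁻¹ • m - ((1 : Fin p → ℝ) ⬝ᵥ n)⁻¹ • n)
      + (wx - (1 : Fin p → ℝ) ⬝ᵥ m / Del *
          (R ⬝ᵥ (((1 : Fin p → ℝ) ⬝ᵥ m)⁻¹ • m - ((1 : Fin p → ℝ) ⬝ᵥ n)⁻¹ • n))) •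
        ((R ⬝ᵥ t / (R ⬝ᵥ n) - R ⬝ᵥ n / ((1 : Fin p → ℝ) ⬝ᵥ n))⁻¹ •
          ((R ⬝ᵥ n)⁻¹ • t - ((1 : Fin p → ℝ) ⬝ᵥ n)⁻¹ • n))
      + (((1 : Fin p → ℝ) ⬝ᵥ n)⁻¹ • n - (R ⬝ᵥ n / ((1 : Fin p → ℝ) ⬝ᵥ n)) •
          ((R ⬝ᵥ t / (R ⬝ᵥ n) - R ⬝ᵥ n / ((1 : Fin p → ℝ) ⬝ᵥ n))⁻¹ •
            ((R ⬝ᵥ n)⁻¹ • t - ((1 : Fin p → ℝ) ⬝ᵥ n)⁻¹ • n)))) :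
    ((1 : Fin p → ℝ) ⬝ᵥ wc = 1) ∧ (R ⬝ᵥ wc = wx) ∧
      ∀ w : Fin p → ℝ, (1 : Fin p → ℝ) ⬝ᵥ w = 1 → R ⬝ᵥ w = wx → w ≠ wc →
        μ ⬝ᵥ w - Del / 2 * (w ⬝ᵥ (S *ᵥ w)) < μ ⬝ᵥ wc - Del / 2 * (wc ⬝ᵥ (S *ᵥ wc)) := by
  subst hwc
  have hone : (1 : Fin p → ℝ) ⬝ᵥ ((((1 : Fin p → ℝ) ⬝ᵥ m / Del) • (((1 : Fin p → ℝ) ⬝ᵥ m)⁻¹ • m - ((1 : Fin p → ℝ) ⬝ᵥ n)⁻¹ • n))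
      + (wx - (1 : Fin p → ℝ) ⬝ᵥ m / Del *
          (R ⬝ᵥ (((1 : Fin p → ℝ) ⬝ᵥ m)⁻¹ • m - ((1 : Fin p → ℝ) ⬝ᵥ n)⁻¹ • n))) •
        ((R ⬝ᵥ t / (R ⬝ᵥ n) - R ⬝ᵥ n / ((1 : Fin p → ℝ) ⬝ᵥ n))⁻¹ •
          ((R ⬝ᵥ n)⁻¹ • t - ((1 : Fin p → ℝ) ⬝ᵥ n)⁻¹ • n))
      + (((1 : Fin p → ℝ) ⬝ᵥ n)⁻¹ • n - (R ⬝ᵥ n / ((1 : Fin p → ℝ) ⬝ᵥ n)) •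
          ((R ⬝ᵥ t / (R ⬝ᵥ n) - R ⬝ᵥ n / ((1 : Fin p → ℝ) ⬝ᵥ n))⁻¹ •
            ((R ⬝ᵥ n)⁻¹ • t - ((1 : Fin p → ℝ) ⬝ᵥ n)⁻¹ • n)))) = 1 := by
    simp only [dotProduct_add, dotProduct_sub, dotProduct_smul, smul_eq_mul, h13,
      inv_mul_cancel₀ hb1, inv_mul_cancel₀ hb2, inv_mul_cancel₀ hb3]
    ring
  have hR : R ⬝ᵥ ((((1 : Fin p → ℝ) ⬝ᵥ m / Del) • (((1 : Fin p → ℝ) ⬝ᵥ m)⁻¹ • m - ((1 : Fin p → ℝ) ⬝ᵥ n)⁻¹ • n))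
      + (wx - (1 : Fin p → ℝ) ⬝ᵥ m / Del *
          (R ⬝ᵥ (((1 : Fin p → ℝ) ⬝ᵥ m)⁻¹ • m - ((1 : Fin p → ℝ) ⬝ᵥ n)⁻¹ • n))) •
        ((R ⬝ᵥ t / (R ⬝ᵥ n) - R ⬝ᵥ n / ((1 : Fin p → ℝ) ⬝ᵥ n))⁻¹ •
          ((R ⬝ᵥ n)⁻¹ • t - ((1 : Fin p → ℝ) ⬝ᵥ n)⁻¹ • n))
      + (((1 : Fin p → ℝ) ⬝ᵥ n)⁻¹ • n - (R ⬝ᵥ n / ((1 : Fin p → ℝ) ⬝ᵥ n)) •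
          ((R ⬝ᵥ t / (R ⬝ᵥ n) - R ⬝ᵥ n / ((1 : Fin p → ℝ) ⬝ᵥ n))⁻¹ •
            ((R ⬝ᵥ n)⁻¹ • t - ((1 : Fin p → ℝ) ⬝ᵥ n)⁻¹ • n)))) = wx := by
    have key : (R ⬝ᵥ t / (R ⬝ᵥ n) - R ⬝ᵥ n / ((1 : Fin p → ℝ) ⬝ᵥ n))⁻¹ *
        ((R ⬝ᵥ n)⁻¹ * (R ⬝ᵥ t) - ((1 : Fin p → ℝ) ⬝ᵥ n)⁻¹ * (R ⬝ᵥ n)) = 1 := by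
      have e : (R ⬝ᵥ n)⁻¹ * (R ⬝ᵥ t) - ((1 : Fin p → ℝ) ⬝ᵥ n)⁻¹ * (R ⬝ᵥ n) =
          R ⬝ᵥ t / (R ⬝ᵥ n) - R ⬝ᵥ n / ((1 : Fin p → ℝ) ⬝ᵥ n) := by
        rw [inv_mul_eq_div, inv_mul_eq_div]
      rw [e]
      exact inv_mul_cancel₀ hd
    simp only [dotProduct_add, dotProduct_sub, dotProduct_smul, smul_eq_mul, key]
    ring
  refine ⟨hone, hR, ?_⟩
  have hκ : Del * ((1 : Fin p → ℝ) ⬝ᵥ m / Del * ((1 : Fin p → ℝ) ⬝ᵥ m)⁻¹) = 1 := by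
    field_simp
  have hgrad : Del • (S *ᵥ ((((1 : Fin p → ℝ) ⬝ᵥ m / Del) • (((1 : Fin p → ℝ) ⬝ᵥ m)⁻¹ • m - ((1 : Fin p → ℝ) ⬝ᵥ n)⁻¹ • n))
      + (wx - (1 : Fin p → ℝ) ⬝ᵥ m / Del *
          (R ⬝ᵥ (((1 : Fin p → ℝ) ⬝ᵥ m)⁻¹ • m - ((1 : Fin p → ℝ) ⬝ᵥ n)⁻¹ • n))) •
        ((R ⬝ᵥ t / (R ⬝ᵥ n) - R ⬝ᵥ n / ((1 : Fin p → ℝ) ⬝ᵥ n))⁻¹ •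
          ((R ⬝ᵥ n)⁻¹ • t - ((1 : Fin p → ℝ) ⬝ᵥ n)⁻¹ • n))
      + (((1 : Fin p → ℝ) ⬝ᵥ n)⁻¹ • n - (R ⬝ᵥ n / ((1 : Fin p → ℝ) ⬝ᵥ n)) •
          ((R ⬝ᵥ t / (R ⬝ᵥ n) - R ⬝ᵥ n / ((1 : Fin p → ℝ) ⬝ᵥ n))⁻¹ •
            ((R ⬝ᵥ n)⁻¹ • t - ((1 : Fin p → ℝ) ⬝ᵥ n)⁻¹ • n))))) =
      μ + (Del * (((1 : Fin p → ℝ) ⬝ᵥ n)⁻¹ - ((1 : Fin p → ℝ) ⬝ᵥ m / Del) * ((1 : Fin p → ℝ) ⬝ᵥ n)⁻¹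
            - ((wx - (1 : Fin p → ℝ) ⬝ᵥ m / Del *
                (R ⬝ᵥ (((1 : Fin p → ℝ) ⬝ᵥ m)⁻¹ • m - ((1 : Fin p → ℝ) ⬝ᵥ n)⁻¹ • n)))
               - R ⬝ᵥ n / ((1 : Fin p → ℝ) ⬝ᵥ n)) *
              (R ⬝ᵥ t / (R ⬝ᵥ n) - R ⬝ᵥ n / ((1 : Fin p → ℝ) ⬝ᵥ n))⁻¹ * ((1 : Fin p → ℝ) ⬝ᵥ n)⁻¹)) • (1 : Fin p → ℝ)
        + (Del * (((wx - (1 : Fin p → ℝ) ⬝ᵥ m / Del *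
                (R ⬝ᵥ (((1 : Fin p → ℝ) ⬝ᵥ m)⁻¹ • m - ((1 : Fin p → ℝ) ⬝ᵥ n)⁻¹ • n)))
               - R ⬝ᵥ n / ((1 : Fin p → ℝ) ⬝ᵥ n)) *
              (R ⬝ᵥ t / (R ⬝ᵥ n) - R ⬝ᵥ n / ((1 : Fin p → ℝ) ⬝ᵥ n))⁻¹ * (R ⬝ᵥ n)⁻¹)) • R := by
    simp only [mulVec_add, mulVec_sub, mulVec_smul, hsm, hsn, hst]
    funext i
    simp only [Pi.add_apply, Pi.sub_apply, Pi.smul_apply, Pi.one_apply, smul_eq_mul]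
    linear_combination μ i * hκ
  intro w hw1 hw2 hne
  exact opt_aux hS hDel hgrad w (by rw [hw1, hone]) (by rw [hw2, hR]) hne

/-- Proposition A.1: the optimal portfolio under a full-investment constraint and a
weight constraint `1_R'w = w_x` is
`w_c* = κ_w(Θμ/B₁ − a) + (w_x − κ_w w_u) l + (a − l (B₃/B₂))`. -/
theorem stmt4 (p : ℕ) (hp : 0 < p)
    (S : Matrix (Fin p) (Fin p) ℝ) (hS : S.PosDef)
    (μ : Fin p → ℝ) (Del : ℝ) (hDel : 0 < Del)
    (R : Fin p → ℝ) (hR : ∀ i, R i = 0 ∨ R i = 1)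
    (hRne0 : R ≠ 0) (hRne1 : R ≠ 1)
    (hB1 : (1 : Fin p → ℝ) ⬝ᵥ (S⁻¹ *ᵥ μ) ≠ 0)
    (hB3 : R ⬝ᵥ (S⁻¹ *ᵥ (1 : Fin p → ℝ)) ≠ 0)
    (hDnz : (R ⬝ᵥ (S⁻¹ *ᵥ R)) * ((1 : Fin p → ℝ) ⬝ᵥ (S⁻¹ *ᵥ (1 : Fin p → ℝ)))
        ≠ (R ⬝ᵥ (S⁻¹ *ᵥ (1 : Fin p → ℝ))) ^ 2) :
    let Th := S⁻¹
    let ones : Fin p → ℝ := 1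
    let B1 := ones ⬝ᵥ (Th *ᵥ μ)
    let B2 := ones ⬝ᵥ (Th *ᵥ ones)
    let B3 := R ⬝ᵥ (Th *ᵥ ones)
    let B4 := R ⬝ᵥ (Th *ᵥ R)
    let κw := B1 / Del
    let a := B2⁻¹ • (Th *ᵥ ones)
    let k := B3⁻¹ • (Th *ᵥ R)
    let wk := B4 / B3
    let wa := B3 / B2
    let l := (wk - wa)⁻¹ • (k - a)
    let wu := R ⬝ᵥ (B1⁻¹ • (Th *ᵥ μ) - B2⁻¹ • (Th *ᵥ ones))
    ∀ wx : ℝ,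
      let wc := κw • (B1⁻¹ • (Th *ᵥ μ) - a) + (wx - κw * wu) • l + (a - (B3 / B2) • l)
      (ones ⬝ᵥ wc = 1) ∧ (R ⬝ᵥ wc = wx) ∧
        ∀ w : Fin p → ℝ, ones ⬝ᵥ w = 1 → R ⬝ᵥ w = wx → w ≠ wc →
          μ ⬝ᵥ w - Del / 2 * (w ⬝ᵥ (S *ᵥ w)) < μ ⬝ᵥ wc - Del / 2 * (wc ⬝ᵥ (S *ᵥ wc)) := by
  intro Th ones B1 B2 B3 B4 κw a k wk wa l wu wx wc
  have hSinv : ∀ v : Fin p → ℝ, S *ᵥ (S⁻¹ *ᵥ v) = v := fun v => by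
    rw [mulVec_mulVec, mul_nonsing_inv _ hS.det_pos.ne'.isUnit, one_mulVec]
  have hTh : (S⁻¹)ᵀ = S⁻¹ := by have h : S⁻¹.IsSymm := (by simpa using hS.inv.isHermitian); exact h
  have h13 : (1 : Fin p → ℝ) ⬝ᵥ (S⁻¹ *ᵥ R) = R ⬝ᵥ (S⁻¹ *ᵥ (1 : Fin p → ℝ)) := by
    rw [dotProduct_mulVec, ← mulVec_transpose, hTh, dotProduct_comm]
  have h1ne : (1 : Fin p → ℝ) ≠ 0 := by
    intro h
    have := congrFun h ⟨0, hp⟩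
    simp at this
  have hb2pos : 0 < (1 : Fin p → ℝ) ⬝ᵥ (S⁻¹ *ᵥ (1 : Fin p → ℝ)) := by
    simpa using hS.inv.dotProduct_mulVec_pos h1ne
  have hb2 : (1 : Fin p → ℝ) ⬝ᵥ (S⁻¹ *ᵥ (1 : Fin p → ℝ)) ≠ 0 := hb2pos.ne'
  have hd : R ⬝ᵥ (S⁻¹ *ᵥ R) / (R ⬝ᵥ (S⁻¹ *ᵥ (1 : Fin p → ℝ)))
      - R ⬝ᵥ (S⁻¹ *ᵥ (1 : Fin p → ℝ)) / ((1 : Fin p → ℝ) ⬝ᵥ (S⁻¹ *ᵥ (1 : Fin p → ℝ))) ≠ 0 := by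
    rw [div_sub_div _ _ hB3 hb2, div_ne_zero_iff]
    refine ⟨fun h => hDnz ?_, mul_ne_zero hB3 hb2⟩
    rw [sub_eq_zero] at h
    rw [h, pow_two]
  simp only [wc, l, k, a, wu, κw, wk, wa, B4, B3, B2, B1, ones, Th]
  exact prop_core hS hDel (hSinv μ) (hSinv 1) (hSinv R) h13 hB1 hb2 hB3 hd wx _ rfl
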